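/- Let s ≥ 1 and M ≥ 0 be reals and b ≥ 1 a natural number. Let Φ : ℕ × ℕ × ℕ → ℝ be a nonnegative function with Φ(0,0,0) ≤ M and Φ(0,k,d) = 0 whenever (k,d) ≠ (0,0), and suppose that for all i ≥ 1, all k, and all d: Φ(i,k,d) ≤ Σ_{j=0}^{k} Φ(i-1, k-j, d)/s^j + Σ_{j₁=1}^{min(2b,i)} Σ_{j₂=1}^{min(2b²,k)} Φ(i-j₁, k-j₂, d-1), where the second double sum is absent when d = 0. Then for all i, k, d: Φ(i,k,d) ≤ 4^{i+k+d} · M · C(i+k-1, k) · s^{2b²(d+1) - k}, where C denotes the binomial coefficient and the power of s is an integer power (possibly with negative exponent). (This is the solution, with precise boundary cases and constants, of the paper's full potential-function recursion combining cases (18) and its depleted-count terms, yielding the bound (21) on E[Φ(i,k,d·t^{0.1})].) -/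

import Mathlib

private lemma choose_shift_le (n k j : ℕ) (hj : j ≤ k) (hk : k ≤ n) :
    (n - j).choose (k - j) ≤ n.choose k := by
  induction j with
  | zero => simp
  | succ j ih =>
    have hj' : j ≤ k := Nat.le_of_succ_le hj
    refine le_trans ?_ (ih hj')
    obtain ⟨m, hm⟩ : ∃ m, n - j = m + 1 := ⟨n - j - 1, by omega⟩
    obtain ⟨r, hr⟩ : ∃ r, k - j = r + 1 := ⟨k - j - 1, by omega⟩
    have h1 : n - (j + 1) = m := by omega
    have h2 : k - (j + 1) = r := by omega
    rw [h1, h2, hm, hr, Nat.choose_succ_succ]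
    exact Nat.le_add_right _ _

private lemma geo_range_le (n : ℕ) : ∑ j ∈ Finset.range n, (1 / 4 : ℝ) ^ j ≤ 4 / 3 := by
  rw [geom_sum_eq (by norm_num) n, div_le_iff_of_neg (by norm_num)]
  have : (0 : ℝ) ≤ (1 / 4 : ℝ) ^ n := by positivity
  nlinarith

private lemma geo_succ_le (n : ℕ) : ∑ j ∈ Finset.range n, (1 / 4 : ℝ) ^ (j + 1) ≤ 1 / 3 := by
  simp only [pow_succ]
  rw [← Finset.sum_mul]
  nlinarith [geo_range_le n, Finset.sum_nonneg (fun j (_ : j ∈ Finset.range n) =>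
    pow_nonneg (by norm_num : (0:ℝ) ≤ 1/4) j)]

private lemma geo_icc_le (m : ℕ) : ∑ j ∈ Finset.Icc 1 m, (1 / 4 : ℝ) ^ j ≤ 1 / 3 := by
  rw [← Finset.Ico_add_one_right_eq_Icc, Finset.sum_Ico_eq_sum_range]
  have : ∀ j ∈ Finset.range (m + 1 - 1), (1 / 4 : ℝ) ^ (1 + j) = (1 / 4 : ℝ) ^ (j + 1) := by
    intro j _; rw [add_comm]
  rw [Finset.sum_congr rfl this]
  exact geo_succ_le _

/-- The solution of the paper's full potential-function recursion, combining the
fit/dense growth term and the depleted-count term, yielding bound (21):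
`Φ(i,k,d) ≤ 4^{i+k+d} · M · C(i+k-1,k) · s^{2b²(d+1) - k}`. -/
theorem full_potential_recursion_solution (s M : ℝ) (hs : 1 ≤ s) (hM : 0 ≤ M)
    (b : ℕ) (hb : 1 ≤ b)
    (Φ : ℕ → ℕ → ℕ → ℝ) (hpos : ∀ i k d, 0 ≤ Φ i k d)
    (h000 : Φ 0 0 0 ≤ M)
    (h0 : ∀ k d, (k, d) ≠ (0, 0) → Φ 0 k d = 0)
    (hrec0 : ∀ i k, 1 ≤ i →
      Φ i k 0 ≤ ∑ j ∈ Finset.range (k + 1), Φ (i - 1) (k - j) 0 / s ^ j)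
    (hrec : ∀ i k d, 1 ≤ i → 1 ≤ d →
      Φ i k d ≤ (∑ j ∈ Finset.range (k + 1), Φ (i - 1) (k - j) d / s ^ j) +
        ∑ j₁ ∈ Finset.Icc 1 (min (2 * b) i), ∑ j₂ ∈ Finset.Icc 1 (min (2 * b ^ 2) k),
          Φ (i - j₁) (k - j₂) (d - 1)) :
    ∀ i k d, Φ i k d ≤
      4 ^ (i + k + d) * M * ((i + k - 1).choose k : ℝ) *
        s ^ ((2 * b ^ 2 * (d + 1) : ℤ) - (k : ℤ)) := by
  have hs0 : (0 : ℝ) < s := lt_of_lt_of_le one_pos hs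
  intro i
  induction i using Nat.strong_induction_on with
  | _ i ih =>
  intro k d
  rcases Nat.eq_zero_or_pos i with rfl | hi
  · -- base case i = 0
    by_cases hkd : k = 0 ∧ d = 0
    · obtain ⟨rfl, rfl⟩ := hkd
      simp only [Nat.add_zero, Nat.zero_add, pow_zero, Nat.choose_self, Nat.cast_one,
        one_mul, mul_one]
      have h1 : (1 : ℝ) ≤ s ^ ((2 * b ^ 2 * ((0:ℕ) + 1) : ℤ) - ((0:ℕ) : ℤ)) :=
        one_le_zpow₀ hs (by
          have : (0:ℤ) ≤ (b:ℤ) ^ 2 := sq_nonneg _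
          push_cast; linarith)
      calc Φ 0 0 0 ≤ M := h000
        _ = M * 1 := (mul_one M).symm
        _ ≤ M * s ^ ((2 * b ^ 2 * ((0:ℕ) + 1) : ℤ) - ((0:ℕ) : ℤ)) := by
            exact mul_le_mul_of_nonneg_left h1 hM
    · have hz : Φ 0 k d = 0 := h0 k d (by
        simp only [Ne, Prod.mk.injEq, not_and]; intro hk hd; exact hkd ⟨hk, hd⟩)
      rw [hz]
      have := zpow_pos hs0 ((2 * b ^ 2 * ((d:ℤ) + 1) : ℤ) - (k : ℤ))
      positivity
  · -- inductive step, i ≥ 1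
    set R : ℝ := 4 ^ (i + k + d) * M * ((i + k - 1).choose k : ℝ) *
        s ^ ((2 * b ^ 2 * (d + 1) : ℤ) - (k : ℤ)) with hRdef
    have hRnn : 0 ≤ R := by
      have := zpow_pos hs0 ((2 * b ^ 2 * ((d:ℤ) + 1) : ℤ) - (k : ℤ))
      positivity
    -- bound on all first-sum terms
    have term1 : ∀ j ∈ Finset.range (k + 1),
        Φ (i - 1) (k - j) d / s ^ j ≤ (1 / 4 : ℝ) ^ (j + 1) * R := by
      intro j hj
      have hjk : j ≤ k := Nat.lt_succ_iff.mp (Finset.mem_range.mp hj)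
      have hΦ := ih (i - 1) (by omega) (k - j) d
      have hchoose : (((i - 1) + (k - j) - 1).choose (k - j) : ℝ) ≤
          ((i + k - 1).choose k : ℝ) := by
        have h1 : ((i - 1) + (k - j) - 1).choose (k - j) ≤
            ((i + k - 1) - j).choose ((k - j)) := by
          apply Nat.choose_le_choose
          omega
        have h2 : ((i + k - 1) - j).choose (k - j) ≤ (i + k - 1).choose k :=
          choose_shift_le (i + k - 1) k j hjk (by omega)
        exact_mod_cast le_trans h1 h2
      have h4 : (4 : ℝ) ^ ((i - 1) + (k - j) + d) * 4 ^ (j + 1) = 4 ^ (i + k + d) := by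
        rw [← pow_add]; congr 1; omega
      have hsj : s ^ ((2 * b ^ 2 * (d + 1) : ℤ) - ((k - j : ℕ) : ℤ)) =
          s ^ ((2 * b ^ 2 * (d + 1) : ℤ) - (k : ℤ)) * s ^ j := by
        rw [← zpow_natCast s j, ← zpow_add₀ (ne_of_gt hs0)]
        congr 1
        have : ((k - j : ℕ) : ℤ) = (k : ℤ) - (j : ℤ) := by
          push_cast [Nat.cast_sub hjk]; ring
        rw [this]; ring
      calc Φ (i - 1) (k - j) d / s ^ j
          ≤ (4 ^ ((i - 1) + (k - j) + d) * M * (((i - 1) + (k - j) - 1).choose (k - j) : ℝ) *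
              s ^ ((2 * b ^ 2 * (d + 1) : ℤ) - ((k - j : ℕ) : ℤ))) / s ^ j := by
            gcongr
        _ ≤ (4 ^ ((i - 1) + (k - j) + d) * M * ((i + k - 1).choose k : ℝ) *
              s ^ ((2 * b ^ 2 * (d + 1) : ℤ) - ((k - j : ℕ) : ℤ))) / s ^ j := by
            gcongr
        _ = (1 / 4 : ℝ) ^ (j + 1) * R := by
            rw [hsj, hRdef]
            have h4' : (4 : ℝ) ^ ((i - 1) + (k - j) + d) =
                4 ^ (i + k + d) * (1 / 4) ^ (j + 1) := by
              rw [← h4, mul_assoc, ← mul_pow]; norm_num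
            rw [h4']
            have hsjne : (s : ℝ) ^ j ≠ 0 := ne_of_gt (pow_pos hs0 j)
            field_simp
    have sum1 : ∑ j ∈ Finset.range (k + 1), Φ (i - 1) (k - j) d / s ^ j ≤ (1 / 3) * R := by
      calc ∑ j ∈ Finset.range (k + 1), Φ (i - 1) (k - j) d / s ^ j
          ≤ ∑ j ∈ Finset.range (k + 1), (1 / 4 : ℝ) ^ (j + 1) * R :=
            Finset.sum_le_sum term1
        _ = (∑ j ∈ Finset.range (k + 1), (1 / 4 : ℝ) ^ (j + 1)) * R :=
            (Finset.sum_mul _ _ _).symm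
        _ ≤ (1 / 3) * R := mul_le_mul_of_nonneg_right (geo_succ_le _) hRnn
    rcases Nat.eq_zero_or_pos d with rfl | hd
    · -- d = 0 case
      calc Φ i k 0 ≤ ∑ j ∈ Finset.range (k + 1), Φ (i - 1) (k - j) 0 / s ^ j :=
            hrec0 i k hi
        _ ≤ (1 / 3) * R := sum1
        _ ≤ R := by linarith
    · -- d ≥ 1 case
      have term2 : ∀ j₁ ∈ Finset.Icc 1 (min (2 * b) i), ∀ j₂ ∈ Finset.Icc 1 (min (2 * b ^ 2) k),
          Φ (i - j₁) (k - j₂) (d - 1) ≤ (1 / 4 : ℝ) ^ j₁ * (1 / 4 : ℝ) ^ j₂ * ((1 / 4) * R) := by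
        intro j₁ hj₁ j₂ hj₂
        rw [Finset.mem_Icc] at hj₁ hj₂
        have hj₁i : 1 ≤ j₁ ∧ j₁ ≤ i := ⟨hj₁.1, le_trans hj₁.2 (min_le_right _ _)⟩
        have hj₂k : 1 ≤ j₂ ∧ j₂ ≤ k := ⟨hj₂.1, le_trans hj₂.2 (min_le_right _ _)⟩
        have hj₂b : j₂ ≤ 2 * b ^ 2 := le_trans hj₂.2 (min_le_left _ _)
        have hΦ := ih (i - j₁) (by omega) (k - j₂) (d - 1)
        have hchoose : (((i - j₁) + (k - j₂) - 1).choose (k - j₂) : ℝ) ≤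
            ((i + k - 1).choose k : ℝ) := by
          have h1 : ((i - j₁) + (k - j₂) - 1).choose (k - j₂) ≤
              ((i + k - 1) - j₂).choose (k - j₂) := by
            apply Nat.choose_le_choose; omega
          have h2 : ((i + k - 1) - j₂).choose (k - j₂) ≤ (i + k - 1).choose k :=
            choose_shift_le (i + k - 1) k j₂ hj₂k.2 (by omega)
          exact_mod_cast le_trans h1 h2
        have hzexp : s ^ ((2 * b ^ 2 * ((d - 1 : ℕ) + 1) : ℤ) - ((k - j₂ : ℕ) : ℤ)) ≤
            s ^ ((2 * b ^ 2 * (d + 1) : ℤ) - (k : ℤ)) := by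
          apply zpow_le_zpow_right₀ hs
          have h1 : ((d - 1 : ℕ) : ℤ) = (d : ℤ) - 1 := by
            push_cast [Nat.cast_sub hd]; ring
          have h2 : ((k - j₂ : ℕ) : ℤ) = (k : ℤ) - (j₂ : ℤ) := by
            push_cast [Nat.cast_sub hj₂k.2]; ring
          rw [h1, h2]
          have : (j₂ : ℤ) ≤ 2 * (b : ℤ) ^ 2 := by exact_mod_cast hj₂b
          nlinarith [this]
        have h4 : (4 : ℝ) ^ ((i - j₁) + (k - j₂) + (d - 1)) * 4 ^ (j₁ + j₂ + 1) =
            4 ^ (i + k + d) := by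
          rw [← pow_add]; congr 1; omega
        calc Φ (i - j₁) (k - j₂) (d - 1)
            ≤ 4 ^ ((i - j₁) + (k - j₂) + (d - 1)) * M *
                (((i - j₁) + (k - j₂) - 1).choose (k - j₂) : ℝ) *
                s ^ ((2 * b ^ 2 * ((d - 1 : ℕ) + 1) : ℤ) - ((k - j₂ : ℕ) : ℤ)) := hΦ
          _ ≤ 4 ^ ((i - j₁) + (k - j₂) + (d - 1)) * M * ((i + k - 1).choose k : ℝ) *
                s ^ ((2 * b ^ 2 * (d + 1) : ℤ) - (k : ℤ)) := by
              gcongr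
          _ = (1 / 4 : ℝ) ^ j₁ * (1 / 4 : ℝ) ^ j₂ * ((1 / 4) * R) := by
              rw [hRdef]
              have h4' : (4 : ℝ) ^ ((i - j₁) + (k - j₂) + (d - 1)) =
                  4 ^ (i + k + d) * ((1 / 4) ^ j₁ * (1 / 4) ^ j₂ * (1 / 4)) := by
                have e : (1 / 4 : ℝ) ^ j₁ * (1 / 4) ^ j₂ * (1 / 4) = (1 / 4) ^ (j₁ + j₂ + 1) := by
                  rw [pow_succ, pow_add]
                rw [e, ← h4, mul_assoc, ← mul_pow]; norm_num
              rw [h4']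
              ring
      have sum2 : ∑ j₁ ∈ Finset.Icc 1 (min (2 * b) i),
          ∑ j₂ ∈ Finset.Icc 1 (min (2 * b ^ 2) k), Φ (i - j₁) (k - j₂) (d - 1) ≤
          (1 / 36) * R := by
        have step1 : ∑ j₁ ∈ Finset.Icc 1 (min (2 * b) i),
            ∑ j₂ ∈ Finset.Icc 1 (min (2 * b ^ 2) k), Φ (i - j₁) (k - j₂) (d - 1) ≤
            ∑ j₁ ∈ Finset.Icc 1 (min (2 * b) i), ∑ j₂ ∈ Finset.Icc 1 (min (2 * b ^ 2) k),
              (1 / 4 : ℝ) ^ j₁ * (1 / 4 : ℝ) ^ j₂ * ((1 / 4) * R) := by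
          apply Finset.sum_le_sum
          intro j₁ hj₁
          apply Finset.sum_le_sum
          intro j₂ hj₂
          exact term2 j₁ hj₁ j₂ hj₂
        have step2 : ∑ j₁ ∈ Finset.Icc 1 (min (2 * b) i), ∑ j₂ ∈ Finset.Icc 1 (min (2 * b ^ 2) k),
              (1 / 4 : ℝ) ^ j₁ * (1 / 4 : ℝ) ^ j₂ * ((1 / 4) * R) =
            (∑ j₁ ∈ Finset.Icc 1 (min (2 * b) i), (1 / 4 : ℝ) ^ j₁) *
            (∑ j₂ ∈ Finset.Icc 1 (min (2 * b ^ 2) k), (1 / 4 : ℝ) ^ j₂) * ((1 / 4) * R) := by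
          rw [Finset.sum_mul_sum, Finset.sum_mul]
          apply Finset.sum_congr rfl
          intro j₁ _
          rw [Finset.sum_mul]
        have hnn1 : (0:ℝ) ≤ ∑ j₁ ∈ Finset.Icc 1 (min (2 * b) i), (1 / 4 : ℝ) ^ j₁ :=
          Finset.sum_nonneg fun j _ => by positivity
        have hnn2 : (0:ℝ) ≤ ∑ j₂ ∈ Finset.Icc 1 (min (2 * b ^ 2) k), (1 / 4 : ℝ) ^ j₂ :=
          Finset.sum_nonneg fun j _ => by positivity
        calc _ ≤ _ := step1
          _ = _ := step2
          _ ≤ (1 / 3 : ℝ) * (1 / 3) * ((1 / 4) * R) := by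
              apply mul_le_mul _ le_rfl (by positivity) (by positivity)
              exact mul_le_mul (geo_icc_le _) (geo_icc_le _) hnn2 (by norm_num)
          _ = (1 / 36) * R := by ring
      calc Φ i k d
          ≤ (∑ j ∈ Finset.range (k + 1), Φ (i - 1) (k - j) d / s ^ j) +
            ∑ j₁ ∈ Finset.Icc 1 (min (2 * b) i), ∑ j₂ ∈ Finset.Icc 1 (min (2 * b ^ 2) k),
              Φ (i - j₁) (k - j₂) (d - 1) := hrec i k d hi hd
        _ ≤ (1 / 3) * R + (1 / 36) * R := add_le_add sum1 sum2
        _ ≤ R := by linarith
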